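/- arXiv:1105.1763 — 8 statements merged into one kernel-verified Lean document; each statement's English description precedes it below -/
import Mathlib

section
/- For α ∈ ℂ, let F_α(z) = (αz³ + 3z² + 2α)/(2z³ + 3αz + 1). Then for every α, the points 1, ω, ω̄ (the cube roots of unity) are critical points of F_α, and F_α(1)=1, F_α(ω)=ω̄, F_α(ω̄)=ω. -/
open Complex

theorem stmt_2 (ω ωb : ℂ) (hω : ω = -1/2 + I * (Real.sqrt 3) / 2)
    (hωb : ωb = -1/2 - I * (Real.sqrt 3) / 2)
    (N D : ℂ → ℂ → ℂ)
    (hN : ∀ α z, N α z = α * z ^ 3 + 3 * z ^ 2 + 2 * α)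
    (hD : ∀ α z, D α z = 2 * z ^ 3 + 3 * α * z + 1) :
    ∀ α : ℂ,
      (∀ z ∈ ({1, ω, ωb} : Set ℂ),
        deriv (N α) z * D α z - N α z * deriv (D α) z = 0) ∧
      N α 1 = D α 1 ∧ N α ω = ωb * D α ω ∧ N α ωb = ω * D α ωb := by
  have hu : (I * (Real.sqrt 3 : ℂ)) ^ 2 = -3 := by
    rw [mul_pow, I_sq]
    have : ((Real.sqrt 3 : ℝ) : ℂ) ^ 2 = 3 := by
      norm_cast
      exact Real.sq_sqrt (by norm_num)
    rw [this]; ring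
  have hω3 : ω ^ 3 = 1 := by
    rw [hω]; linear_combination ((I * (Real.sqrt 3 : ℂ) - 3) / 8) * hu
  have hωb3 : ωb ^ 3 = 1 := by
    rw [hωb]; linear_combination (-(I * (Real.sqrt 3 : ℂ) + 3) / 8) * hu
  have hω2 : ω ^ 2 = ωb := by
    rw [hω, hωb]; linear_combination (1/4 : ℂ) * hu
  have hωb2 : ωb ^ 2 = ω := by
    rw [hω, hωb]; linear_combination (1/4 : ℂ) * hu
  have hmul : ω * ωb = 1 := by
    rw [hω, hωb]; linear_combination (-(1/4) : ℂ) * hu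
  intro α
  have hN' : ∀ z : ℂ, deriv (N α) z = 3 * α * z ^ 2 + 6 * z := by
    intro z
    have hfun : N α = fun z => α * z ^ 3 + 3 * z ^ 2 + 2 * α := funext (hN α)
    rw [hfun]
    have h : HasDerivAt (fun z : ℂ => α * z ^ 3 + 3 * z ^ 2 + 2 * α)
        (α * (3 * z ^ 2) + 3 * (2 * z) + 0) z := by
      exact (((hasDerivAt_pow 3 z).const_mul α).add
        ((hasDerivAt_pow 2 z).const_mul 3)).add_const (2 * α) |>.congr_deriv (by
          push_cast; ring)
    rw [h.deriv]; ring
  have hD' : ∀ z : ℂ, deriv (D α) z = 6 * z ^ 2 + 3 * α := by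
    intro z
    have hfun : D α = fun z => 2 * z ^ 3 + 3 * α * z + 1 := funext (hD α)
    rw [hfun]
    have h : HasDerivAt (fun z : ℂ => 2 * z ^ 3 + 3 * α * z + 1)
        (2 * (3 * z ^ 2) + 3 * α * 1 + 0) z := by
      exact (((hasDerivAt_pow 3 z).const_mul 2).add
        ((hasDerivAt_id z).const_mul (3 * α))).add_const 1 |>.congr_deriv (by
          push_cast; ring)
    rw [h.deriv]; ring
  refine ⟨?_, ?_, ?_, ?_⟩
  · intro z hz
    have hz3 : z ^ 3 = 1 := by
      rcases hz with h | h | h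
      · simp [h]
      · rw [h]; exact hω3
      · rw [Set.mem_singleton_iff] at h; rw [h]; exact hωb3
    rw [hN', hD', hN α, hD α]
    linear_combination (6 * α ^ 2 - 6 * z) * hz3
  · rw [hN, hD]; ring
  · rw [hN, hD]
    linear_combination (α - 2 * ωb) * hω3 + 3 * hω2 - 3 * α * hmul
  · rw [hN, hD]
    linear_combination (α - 2 * ω) * hωb3 + 3 * hωb2 - 3 * α * hmul
end

section
/- For α ∈ ℂ with 2α³ + 1 ≠ 0, the fourth critical point of F_α(z) = (αz³ + 3z² + 2α)/(2z³ + 3αz + 1) (besides 1, ω, ω̄) is α², and the corresponding critical value is F_α(α²) = α(α³+2)/(2α³+1). -/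
open Complex

theorem stmt_3 (ω ωb : ℂ) (hω : ω = -1/2 + I * (Real.sqrt 3) / 2)
    (hωb : ωb = -1/2 - I * (Real.sqrt 3) / 2)
    (N D : ℂ → ℂ → ℂ)
    (hN : ∀ α z, N α z = α * z ^ 3 + 3 * z ^ 2 + 2 * α)
    (hD : ∀ α z, D α z = 2 * z ^ 3 + 3 * α * z + 1) :
    ∀ α : ℂ, 2 * α ^ 3 + 1 ≠ 0 →
      (∀ z : ℂ, deriv (N α) z * D α z - N α z * deriv (D α) z = 0 ↔
        z = 1 ∨ z = ω ∨ z = ωb ∨ z = α ^ 2) ∧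
      N α (α ^ 2) * (2 * α ^ 3 + 1) = α * (α ^ 3 + 2) * D α (α ^ 2) := by
  intro α hα
  have hsq : (Real.sqrt 3 : ℂ) ^ 2 = 3 := by
    rw [← ofReal_pow, Real.sq_sqrt (by norm_num : (3:ℝ) ≥ 0)]
    norm_num
  have hI : I ^ 2 = -1 := I_sq
  have hNf : N α = fun z => α * z ^ 3 + 3 * z ^ 2 + 2 * α := funext (hN α)
  have hDf : D α = fun z => 2 * z ^ 3 + 3 * α * z + 1 := funext (hD α)
  constructor
  · intro z
    have hNd : deriv (N α) z = 3 * α * z ^ 2 + 6 * z := by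
      rw [hNf]
      have h := (((hasDerivAt_pow 3 z).const_mul α).add
        ((hasDerivAt_pow 2 z).const_mul (3:ℂ))).add_const (2 * α)
      refine h.deriv.trans ?_
      push_cast
      ring
    have hDd : deriv (D α) z = 6 * z ^ 2 + 3 * α := by
      rw [hDf]
      have h := (((hasDerivAt_pow 3 z).const_mul (2:ℂ)).add
        ((hasDerivAt_id' z).const_mul (3 * α))).add_const (1:ℂ)
      refine h.deriv.trans ?_
      push_cast
      ring
    rw [hNd, hDd, hN, hD]
    have key : (3 * α * z ^ 2 + 6 * z) * (2 * z ^ 3 + 3 * α * z + 1) -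
        (α * z ^ 3 + 3 * z ^ 2 + 2 * α) * (6 * z ^ 2 + 3 * α)
        = -6 * ((z - 1) * ((z - ω) * ((z - ωb) * (z - α ^ 2)))) := by
      rw [hω, hωb]
      linear_combination (3/2 * (z - 1) * (z - α ^ 2)) * hsq +
        (-3/2 * (z - 1) * (z - α ^ 2) * ((Real.sqrt 3 : ℂ))^2) * hI
    rw [key]
    simp [mul_eq_zero, sub_eq_zero]
  · rw [hN, hD]
    ring
end

section
/- Let Y(α) = α(α³+2)/(2α³+1), viewed as a degree 4 rational map of the Riemann sphere. Then the critical values of Y are exactly 1, ω, and ω̄ (the cube roots of unity), and Y⁻¹({1, ω, ω̄}) = {1, ω, ω̄, -1, -ω, -ω̄} (the sixth roots of unity). -/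
open Complex

theorem stmt_5 (Y : ℂ → ℂ) (hY : ∀ α, Y α = α * (α ^ 3 + 2) / (2 * α ^ 3 + 1))
    (ω ωb : ℂ) (hω : ω = -1/2 + I * (Real.sqrt 3) / 2)
    (hωb : ωb = -1/2 - I * (Real.sqrt 3) / 2) :
    {w : ℂ | ∃ z : ℂ, 2 * z ^ 3 + 1 ≠ 0 ∧ deriv Y z = 0 ∧ Y z = w} = {1, ω, ωb} ∧
    Y ⁻¹' {1, ω, ωb} = {1, ω, ωb, -1, -ω, -ωb} := by
  have hs : ((Real.sqrt 3 : ℝ) : ℂ) ^ 2 = 3 := by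
    norm_cast
    rw [Real.sq_sqrt] <;> norm_num
  have h1 : ω ^ 2 + ω + 1 = 0 := by
    rw [hω]; linear_combination ((Real.sqrt 3 : ℂ) ^ 2 / 4) * Complex.I_sq - (1/4) * hs
  have hb : ωb = ω ^ 2 := by
    rw [hω, hωb]
    linear_combination (-(Real.sqrt 3 : ℂ) ^ 2 / 4) * Complex.I_sq + (1/4) * hs
  have hω3 : ω ^ 3 = 1 := by linear_combination (ω - 1) * h1
  have hωb3 : ωb ^ 3 = 1 := by rw [hb]; linear_combination (ω ^ 3 + 1) * hω3
  have hcube : ∀ z : ℂ, z ^ 3 = 1 → z = 1 ∨ z = ω ∨ z = ωb := by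
    intro z hz
    have hfac : (z - 1) * ((z - ω) * (z - ωb)) = 0 := by
      rw [hb]
      linear_combination hz + (z - z ^ 2) * h1 + (z - 1) * hω3
    rcases mul_eq_zero.1 hfac with h | h
    · exact Or.inl (sub_eq_zero.1 h)
    · rcases mul_eq_zero.1 h with h' | h'
      · exact Or.inr (Or.inl (sub_eq_zero.1 h'))
      · exact Or.inr (Or.inr (sub_eq_zero.1 h'))
  have hYval : ∀ z : ℂ, z ^ 3 = 1 → Y z = z := by
    intro z hz
    rw [hY, hz]
    norm_num
  have hYneg : ∀ z : ℂ, z ^ 3 = 1 → Y (-z) = z := by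
    intro z hz
    have h3 : (-z) ^ 3 = -1 := by linear_combination -hz
    rw [hY, h3]
    ring_nf
  have hD : ∀ z : ℂ, 2 * z ^ 3 + 1 ≠ 0 →
      deriv Y z = 2 * (z ^ 3 - 1) ^ 2 / (2 * z ^ 3 + 1) ^ 2 := by
    intro z hz
    have hYfun : Y = fun α => α * (α ^ 3 + 2) / (2 * α ^ 3 + 1) := funext hY
    have hnum : HasDerivAt (fun α : ℂ => α * (α ^ 3 + 2)) (1 * (z ^ 3 + 2) + z * (3 * z ^ 2)) z := by
      have h2 : HasDerivAt (fun α : ℂ => α ^ 3 + 2) (3 * z ^ 2) z := by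
        simpa using (hasDerivAt_pow 3 z).add_const (2 : ℂ)
      exact (hasDerivAt_id z).mul h2
    have hden : HasDerivAt (fun α : ℂ => 2 * α ^ 3 + 1) (2 * (3 * z ^ 2)) z := by
      simpa using ((hasDerivAt_pow 3 z).const_mul (2 : ℂ)).add_const (1 : ℂ)
    have hd : HasDerivAt (fun α : ℂ => α * (α ^ 3 + 2) / (2 * α ^ 3 + 1)) _ z := hnum.div hden hz
    rw [hYfun, hd.deriv]
    field_simp
    ring
  have hcrit : ∀ z : ℂ, z ^ 3 = 1 → 2 * z ^ 3 + 1 ≠ 0 ∧ deriv Y z = 0 ∧ Y z = z := by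
    intro z hz
    have hne : 2 * z ^ 3 + 1 ≠ 0 := by rw [hz]; norm_num
    refine ⟨hne, ?_, hYval z hz⟩
    rw [hD z hne, hz]
    norm_num
  constructor
  · ext w
    simp only [Set.mem_setOf_eq, Set.mem_insert_iff, Set.mem_singleton_iff]
    constructor
    · rintro ⟨z, hz, hdz, hzw⟩
      rw [hD z hz] at hdz
      have hd2 : (2 * z ^ 3 + 1) ^ 2 ≠ 0 := pow_ne_zero _ hz
      rw [div_eq_zero_iff] at hdz
      rcases hdz with hdz | hdz
      · have hz3 : z ^ 3 = 1 := by
          have h2' : (z ^ 3 - 1) ^ 2 = 0 := by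
            have h20 : (2 : ℂ) ≠ 0 := by norm_num
            exact (mul_eq_zero.1 hdz).resolve_left h20
          have := pow_eq_zero_iff (n := 2) (by norm_num) |>.1 h2'
          linear_combination this
        rw [← hzw, hYval z hz3]
        exact hcube z hz3
      · exact absurd hdz hd2
    · intro hw
      rcases hw with h | h | h
      · obtain ⟨hne, hd0, hv⟩ := hcrit 1 (by norm_num)
        exact ⟨1, hne, hd0, hv.trans h.symm⟩
      · obtain ⟨hne, hd0, hv⟩ := hcrit ω hω3
        exact ⟨ω, hne, hd0, hv.trans h.symm⟩
      · obtain ⟨hne, hd0, hv⟩ := hcrit ωb hωb3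
        exact ⟨ωb, hne, hd0, hv.trans h.symm⟩
  · ext z
    simp only [Set.mem_preimage, Set.mem_insert_iff, Set.mem_singleton_iff]
    constructor
    · intro hz
      by_cases hd : 2 * z ^ 3 + 1 = 0
      · exfalso
        have h0 : Y z = 0 := by rw [hY, hd, div_zero]
        rw [h0] at hz
        have hω0 : ω ≠ 0 := by
          intro h; rw [h] at hω3; norm_num at hω3
        have hωb0 : ωb ≠ 0 := by
          intro h; rw [h] at hωb3; norm_num at hωb3
        rcases hz with h | h | h
        · exact one_ne_zero h.symm
        · exact hω0 h.symm
        · exact hωb0 h.symm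
      · rcases hz with h | h | h
        · rw [hY, div_eq_iff hd] at h
          have hfac : (z - 1) ^ 3 * (z + 1) = 0 := by linear_combination h
          rcases mul_eq_zero.1 hfac with h' | h'
          · have := pow_eq_zero_iff (n := 3) (by norm_num) |>.1 h'
            exact Or.inl (sub_eq_zero.1 this)
          · exact Or.inr (Or.inr (Or.inr (Or.inl (by linear_combination h'))))
        · rw [hY, div_eq_iff hd] at h
          have hfac : (z - ω) ^ 3 * (z + ω) = 0 := by
            linear_combination h + (2 * z - ω) * hω3
          rcases mul_eq_zero.1 hfac with h' | h'
          · have := pow_eq_zero_iff (n := 3) (by norm_num) |>.1 h'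
            exact Or.inr (Or.inl (sub_eq_zero.1 this))
          · exact Or.inr (Or.inr (Or.inr (Or.inr (Or.inl (by linear_combination h')))))
        · rw [hY, div_eq_iff hd] at h
          have hfac : (z - ωb) ^ 3 * (z + ωb) = 0 := by
            linear_combination h + (2 * z - ωb) * hωb3
          rcases mul_eq_zero.1 hfac with h' | h'
          · have := pow_eq_zero_iff (n := 3) (by norm_num) |>.1 h'
            exact Or.inr (Or.inr (Or.inl (sub_eq_zero.1 this)))
          · exact Or.inr (Or.inr (Or.inr (Or.inr (Or.inr (by linear_combination h')))))
    · intro hz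
      rcases hz with h | h | h | h | h | h
      · rw [h]; exact Or.inl (hYval 1 (by norm_num))
      · rw [h]; exact Or.inr (Or.inl (hYval ω hω3))
      · rw [h]; exact Or.inr (Or.inr (hYval ωb hωb3))
      · rw [h]; exact Or.inl (by simpa using hYneg 1 (by norm_num))
      · rw [h]; exact Or.inr (Or.inl (hYneg ω hω3))
      · rw [h]; exact Or.inr (Or.inr (hYneg ωb hωb3))
end

section
/- Let f(z) = 2i(z² - (1+i)/2)². Then the postcritical set of f (as a map of ℙ¹) is {0, 1, -1, ∞}. In particular, f maps both square roots of (1+i)/2 to 0, maps 0 to -1, maps -1 to 1, and fixes 1 and ∞. -/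
open Complex OnePoint

theorem stmt_9 (f : ℂ → ℂ)
    (hf : ∀ z, f z = 2 * I * (z ^ 2 - (1 + I) / 2) ^ 2)
    (c : ℂ) (hc : c ^ 2 = (1 + I) / 2)
    (F : OnePoint ℂ → OnePoint ℂ)
    (hF1 : F ∞ = ∞) (hF2 : ∀ z : ℂ, F (z : OnePoint ℂ) = ((f z : ℂ) : OnePoint ℂ)) :
    f c = 0 ∧ f (-c) = 0 ∧ f 0 = -1 ∧ f (-1) = 1 ∧ f 1 = 1 ∧
    (⋃ (k : ℕ) (_ : 1 ≤ k),
        F^[k] '' ({((0 : ℂ) : OnePoint ℂ), ((c : ℂ) : OnePoint ℂ),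
          ((-c : ℂ) : OnePoint ℂ), ∞} : Set (OnePoint ℂ))) =
      {((0 : ℂ) : OnePoint ℂ), ((1 : ℂ) : OnePoint ℂ), ((-1 : ℂ) : OnePoint ℂ), ∞} := by
  have ec : f c = 0 := by rw [hf, hc]; ring
  have ec' : f (-c) = 0 := by rw [hf, show (-c) ^ 2 = c ^ 2 from by ring, hc]; ring
  have e0 : f 0 = -1 := by rw [hf]; linear_combination (I/2 + 1) * Complex.I_sq
  have em1 : f (-1) = 1 := by rw [hf]; linear_combination (I/2 - 1) * Complex.I_sq
  have e1 : f 1 = 1 := by rw [hf]; linear_combination (I/2 - 1) * Complex.I_sq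
  refine ⟨ec, ec', e0, em1, e1, ?_⟩
  set S : Set (OnePoint ℂ) := {((0 : ℂ) : OnePoint ℂ), ((c : ℂ) : OnePoint ℂ),
      ((-c : ℂ) : OnePoint ℂ), ∞} with hS
  set T : Set (OnePoint ℂ) := {((0 : ℂ) : OnePoint ℂ), ((1 : ℂ) : OnePoint ℂ),
      ((-1 : ℂ) : OnePoint ℂ), ∞} with hT
  have F0 : F ((0 : ℂ) : OnePoint ℂ) = ((-1 : ℂ) : OnePoint ℂ) := by rw [hF2, e0]
  have F1 : F ((1 : ℂ) : OnePoint ℂ) = ((1 : ℂ) : OnePoint ℂ) := by rw [hF2, e1]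
  have Fm1 : F ((-1 : ℂ) : OnePoint ℂ) = ((1 : ℂ) : OnePoint ℂ) := by rw [hF2, em1]
  have Fc : F ((c : ℂ) : OnePoint ℂ) = ((0 : ℂ) : OnePoint ℂ) := by rw [hF2, ec]
  have Fmc : F ((-c : ℂ) : OnePoint ℂ) = ((0 : ℂ) : OnePoint ℂ) := by rw [hF2, ec']
  have hTT : ∀ x ∈ T, F x ∈ T := by
    intro x hx
    rcases hx with rfl | rfl | rfl | rfl
    · rw [F0]; right; right; left; rfl
    · rw [F1]; right; left; rfl
    · rw [Fm1]; right; left; rfl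
    · rw [hF1]; right; right; right; rfl
  have key : ∀ k, 1 ≤ k → ∀ y ∈ S, F^[k] y ∈ T := by
    intro k hk
    induction k with
    | zero => omega
    | succ n ih =>
      intro y hy
      rcases Nat.eq_or_lt_of_le hk with h | h
      · have : n = 0 := by omega
        subst this
        rw [Function.iterate_succ_apply', Function.iterate_zero_apply]
        rcases hy with rfl | rfl | rfl | rfl
        · rw [F0]; right; right; left; rfl
        · rw [Fc]; left; rfl
        · rw [Fmc]; left; rfl
        · rw [hF1]; right; right; right; rfl
      · rw [Function.iterate_succ_apply']
        exact hTT _ (ih (by omega) y hy)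
  ext x
  simp only [Set.mem_iUnion, Set.mem_image]
  constructor
  · rintro ⟨k, hk, y, hy, rfl⟩
    exact key k hk y hy
  · intro hx
    rcases hx with rfl | rfl | rfl | rfl
    · exact ⟨1, le_refl 1, ((c : ℂ) : OnePoint ℂ), by right; left; rfl, by
        simp only [Function.iterate_one]; exact Fc⟩
    · exact ⟨2, by norm_num, ((0 : ℂ) : OnePoint ℂ), by left; rfl, by
        show F (F _) = _
        rw [F0, Fm1]⟩
    · exact ⟨1, le_refl 1, ((0 : ℂ) : OnePoint ℂ), by left; rfl, by
        simp only [Function.iterate_one]; exact F0⟩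
    · exact ⟨1, le_refl 1, ∞, by right; right; right; rfl, by
        simp only [Function.iterate_one]; exact hF1⟩
end

section
/- For n ≥ 2, let f(z) = g(zⁿ) where g(z) = ((n+1)z - z^{n+1})/n, i.e., f(z) = ((n+1)zⁿ - z^{n(n+1)})/n. Then the set A = {0, ∞} ∪ {n-th roots of unity} satisfies f(A) ⊆ A, every critical value of f lies in A, and the postcritical set of f equals A; in particular |P_f| = n + 2. -/
open OnePoint

theorem stmt_11 (n : ℕ) (hn : 2 ≤ n) (f : ℂ → ℂ)
    (hf : ∀ z, f z = ((n + 1) * z ^ n - z ^ (n * (n + 1))) / n)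
    (F : OnePoint ℂ → OnePoint ℂ)
    (hF1 : F ∞ = ∞) (hF2 : ∀ z : ℂ, F (z : OnePoint ℂ) = ((f z : ℂ) : OnePoint ℂ))
    (A : Set (OnePoint ℂ))
    (hA : A = {∞, ((0 : ℂ) : OnePoint ℂ)} ∪
        (fun z : ℂ => (z : OnePoint ℂ)) '' {z : ℂ | z ^ n = 1})
    (Ω : Set (OnePoint ℂ))
    (hΩ : Ω = {∞} ∪ (fun z : ℂ => (z : OnePoint ℂ)) '' {z : ℂ | deriv f z = 0}) :
    F '' A ⊆ A ∧ F '' Ω ⊆ A ∧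
    (⋃ (k : ℕ) (_ : 1 ≤ k), F^[k] '' Ω) = A ∧ A.ncard = n + 2 := by
  have hn0 : n ≠ 0 := by omega
  have hnC : (n : ℂ) ≠ 0 := Nat.cast_ne_zero.mpr hn0
  have hn1C : ((n : ℂ) + 1) ≠ 0 := by
    have : ((n + 1 : ℕ) : ℂ) ≠ 0 := Nat.cast_ne_zero.mpr (by omega)
    push_cast at this; exact this
  have hexp : n * (n + 1) - 1 = (n - 1) + n * n := by
    obtain ⟨m, rfl⟩ : ∃ m, n = m + 2 := ⟨n - 2, by omega⟩
    have h1 : (m + 2) * (m + 2 + 1) = (m * m + 5 * m + 5) + 1 := by ring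
    have h2 : (m + 2) * (m + 2) = m * m + 4 * m + 4 := by ring
    rw [h1, h2]
    generalize m * m = k
    omega
  have hderiv : ∀ z : ℂ, deriv f z = ((n : ℂ) + 1) * (z ^ (n - 1) - z ^ (n * (n + 1) - 1)) := by
    intro z
    have hfe : f = fun z : ℂ => ((n + 1) * z ^ n - z ^ (n * (n + 1))) / n := funext hf
    have h1 : HasDerivAt (fun z : ℂ => (((n : ℂ) + 1) * z ^ n - z ^ (n * (n + 1))) / n)
        ((((n : ℂ) + 1) * ((n : ℂ) * z ^ (n - 1)) -
          (↑(n * (n + 1)) : ℂ) * z ^ (n * (n + 1) - 1)) / n) z :=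
      (((hasDerivAt_pow n z).const_mul ((n : ℂ) + 1)).sub
        (hasDerivAt_pow (n * (n + 1)) z)).div_const _
    rw [hfe, h1.deriv]
    push_cast
    field_simp
  have hsplit : ∀ z : ℂ, z ^ (n * (n + 1) - 1) = z ^ (n - 1) * z ^ (n * n) := by
    intro z; rw [← pow_add, ← hexp]
  have hcrit : {z : ℂ | deriv f z = 0} = {0} ∪ {z : ℂ | z ^ (n * n) = 1} := by
    ext z
    simp only [Set.mem_setOf_eq, Set.mem_union, Set.mem_singleton_iff, hderiv]
    constructor
    · intro h
      rcases mul_eq_zero.mp h with h | h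
      · exact absurd h hn1C
      · have h2 : z ^ (n - 1) * (1 - z ^ (n * n)) = 0 := by
          rw [mul_sub, mul_one, ← hsplit]; exact h
        rcases mul_eq_zero.mp h2 with h3 | h3
        · exact Or.inl (pow_eq_zero_iff (by omega : n - 1 ≠ 0) |>.mp h3)
        · exact Or.inr (sub_eq_zero.mp h3).symm
    · rintro (rfl | h)
      · have e1 : (0 : ℂ) ^ (n - 1) = 0 := zero_pow (by omega)
        have e2 : (0 : ℂ) ^ (n * (n + 1) - 1) = 0 := by
          rw [hexp, pow_add, e1, zero_mul]
        rw [e1, e2, sub_zero, mul_zero]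
      · rw [hsplit, h, mul_one, sub_self, mul_zero]
  have hroot : ∀ z : ℂ, z ^ (n * n) = 1 → f z = z ^ n := by
    intro z hz
    rw [hf, show n * (n + 1) = n * n + n by ring, pow_add, hz, one_mul]
    field_simp
    ring
  have hf0 : f 0 = 0 := by
    rw [hf, zero_pow hn0, zero_pow (by positivity : n * (n + 1) ≠ 0)]
    simp
  have hAmem : ∀ w : ℂ, w ^ n = 1 → (w : OnePoint ℂ) ∈ A := by
    intro w hw; rw [hA]; exact Or.inr ⟨w, hw, rfl⟩
  have hA0 : ((0 : ℂ) : OnePoint ℂ) ∈ A := by rw [hA]; exact Or.inl (Or.inr rfl)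
  have hAi : ∞ ∈ A := by rw [hA]; exact Or.inl (Or.inl rfl)
  have hFA : F '' A ⊆ A := by
    rintro _ ⟨x, hx, rfl⟩
    rw [hA] at hx
    simp only [Set.mem_union, Set.mem_insert_iff, Set.mem_singleton_iff, Set.mem_image,
      Set.mem_setOf_eq] at hx
    rcases hx with (rfl | rfl) | ⟨z, hz, rfl⟩
    · rw [hF1]; exact hAi
    · rw [hF2, hf0]; exact hA0
    · rw [hF2, hroot z (by rw [pow_mul, hz, one_pow])]
      exact hAmem _ (by rw [hz, one_pow])
  have hFΩ : F '' Ω ⊆ A := by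
    rintro _ ⟨x, hx, rfl⟩
    rw [hΩ, hcrit] at hx
    simp only [Set.mem_union, Set.mem_singleton_iff, Set.mem_image, Set.mem_setOf_eq] at hx
    rcases hx with rfl | ⟨z, rfl | hz, rfl⟩
    · rw [hF1]; exact hAi
    · rw [hF2, hf0]; exact hA0
    · rw [hF2, hroot z hz]
      exact hAmem _ (by rw [← pow_mul]; exact hz)
  have hΩsub : A ⊆ F '' Ω := by
    intro x hx
    rw [hA] at hx
    simp only [Set.mem_union, Set.mem_insert_iff, Set.mem_singleton_iff, Set.mem_image,
      Set.mem_setOf_eq] at hx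
    rcases hx with (rfl | rfl) | ⟨w, hw, rfl⟩
    · exact ⟨∞, by rw [hΩ]; exact Or.inl rfl, hF1⟩
    · refine ⟨((0 : ℂ) : OnePoint ℂ), ?_, by rw [hF2, hf0]⟩
      rw [hΩ, hcrit]; exact Or.inr ⟨0, Or.inl rfl, rfl⟩
    · obtain ⟨z, hz⟩ := IsAlgClosed.exists_pow_nat_eq w (n := n) (by omega)
      have hz2 : z ^ (n * n) = 1 := by rw [pow_mul, hz, hw]
      refine ⟨(z : OnePoint ℂ), ?_, ?_⟩
      · rw [hΩ, hcrit]; exact Or.inr ⟨z, Or.inr hz2, rfl⟩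
      · rw [hF2, hroot z hz2, hz]
  have hiter : ∀ k, 1 ≤ k → F^[k] '' Ω ⊆ A := by
    intro k
    induction k with
    | zero => intro h; exact absurd h (by omega)
    | succ k ih =>
      intro _
      rcases Nat.eq_zero_or_pos k with rfl | hk'
      · simpa using hFΩ
      · rw [Function.iterate_succ', Set.image_comp]
        exact (Set.image_mono (ih hk')).trans hFA
  have hU : (⋃ (k : ℕ) (_ : 1 ≤ k), F^[k] '' Ω) = A := by
    apply subset_antisymm
    · exact Set.iUnion₂_subset hiter
    · intro x hx
      exact Set.mem_iUnion₂.mpr ⟨1, le_rfl, by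
        simp only [Function.iterate_one]; exact hΩsub hx⟩
  have hSeq : {z : ℂ | z ^ n = 1} = ↑(Polynomial.nthRootsFinset n (1 : ℂ)) := by
    ext z
    simp [Polynomial.mem_nthRootsFinset (by omega : 0 < n) (1 : ℂ)]
  have hScard : {z : ℂ | z ^ n = 1}.ncard = n := by
    rw [hSeq, Set.ncard_coe_finset]
    exact (Complex.isPrimitiveRoot_exp n hn0).card_nthRootsFinset
  have hfin : ((fun z : ℂ => (z : OnePoint ℂ)) '' {z : ℂ | z ^ n = 1}).Finite :=
    (hSeq ▸ (Polynomial.nthRootsFinset n (1 : ℂ)).finite_toSet).image _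
  have h0notin : ((0 : ℂ) : OnePoint ℂ) ∉
      (fun z : ℂ => (z : OnePoint ℂ)) '' {z : ℂ | z ^ n = 1} := by
    rintro ⟨z, hz, hze⟩
    rw [OnePoint.coe_eq_coe] at hze
    subst hze
    simp only [Set.mem_setOf_eq, zero_pow hn0] at hz
    exact zero_ne_one hz
  have hinfnotin : ∞ ∉ insert ((0 : ℂ) : OnePoint ℂ)
      ((fun z : ℂ => (z : OnePoint ℂ)) '' {z : ℂ | z ^ n = 1}) := by
    intro hmem
    rcases Set.mem_insert_iff.mp hmem with h | ⟨z, _, hz⟩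
    · exact (OnePoint.infty_ne_coe (0 : ℂ)) h
    · exact (OnePoint.coe_ne_infty z) hz
  have hcardA : A.ncard = n + 2 := by
    rw [hA, Set.insert_union, Set.singleton_union,
      Set.ncard_insert_of_notMem hinfnotin (hfin.insert _),
      Set.ncard_insert_of_notMem h0notin hfin,
      Set.ncard_image_of_injective _ OnePoint.coe_injective, hScard]
  exact ⟨hFA, hFΩ, hU, hcardA⟩
end

section
/- Let s, g: ℙ¹ → ℙ¹ be rational maps with critical value sets V_s and V_g, let A ⊂ ℙ¹ be finite with V_s ⊆ A, and suppose V_g ∪ g(A) ⊆ s⁻¹(A). Let f = g ∘ s and B = V_g ∪ g(A). Then f(B) ⊆ B, the critical value set of f equals V_g ∪ g(V_s) ⊆ B, and the postcritical set of f satisfies V_g ∪ g(V_s) ⊆ P_f ⊆ B. In particular f is postcritically finite. -/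
theorem stmt_12 (s g : OnePoint ℂ → OnePoint ℂ) (hs : Function.Surjective s)
    (Ωs Ωg Vs Vg : Set (OnePoint ℂ))
    (hVs : Vs = s '' Ωs) (hVg : Vg = g '' Ωg) (hVgfin : Vg.Finite)
    (A : Set (OnePoint ℂ)) (hAfin : A.Finite)
    (h1 : Vs ⊆ A) (h2 : Vg ∪ g '' A ⊆ s ⁻¹' A)
    (f : OnePoint ℂ → OnePoint ℂ) (hf : f = g ∘ s)
    (Ωf : Set (OnePoint ℂ)) (hΩf : Ωf = Ωs ∪ s ⁻¹' Ωg)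
    (B : Set (OnePoint ℂ)) (hB : B = Vg ∪ g '' A)
    (Pf : Set (OnePoint ℂ)) (hPf : Pf = ⋃ (k : ℕ) (_ : 1 ≤ k), f^[k] '' Ωf) :
    f '' B ⊆ B ∧ f '' Ωf = Vg ∪ g '' Vs ∧ Vg ∪ g '' Vs ⊆ B ∧
    Vg ∪ g '' Vs ⊆ Pf ∧ Pf ⊆ B ∧ Pf.Finite := by
  have hBsubA : B ⊆ s ⁻¹' A := hB ▸ h2
  have hfB : f '' B ⊆ B := by
    intro y hy
    obtain ⟨x, hx, rfl⟩ := hy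
    have hsx : s x ∈ A := hBsubA hx
    rw [hB, hf]
    exact Or.inr ⟨s x, hsx, rfl⟩
  have hfΩf : f '' Ωf = Vg ∪ g '' Vs := by
    rw [hΩf, hf, Set.image_union, Set.image_comp, Set.image_comp,
      Set.image_preimage_eq _ hs, hVs, hVg, Set.union_comm]
  have hsub : Vg ∪ g '' Vs ⊆ B := by
    rw [hB]
    exact Set.union_subset_union_right _ (Set.image_mono h1)
  refine ⟨hfB, hfΩf, hsub, ?_, ?_, ?_⟩
  · rw [hPf, ← hfΩf]
    intro y hy
    exact Set.mem_iUnion.2 ⟨1, Set.mem_iUnion.2 ⟨le_refl 1, by simpa using hy⟩⟩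
  · rw [hPf]
    refine Set.iUnion_subset fun k => Set.iUnion_subset fun hk => ?_
    obtain ⟨m, rfl⟩ := Nat.exists_eq_add_of_le hk
    induction m with
    | zero => simpa [hfΩf] using hsub
    | succ n ih =>
      have : f^[1 + (n + 1)] '' Ωf = f '' (f^[1 + n] '' Ωf) := by
        rw [← Set.image_comp, ← Function.iterate_succ' f (1 + n)]
        congr 1
      rw [this]
      exact (Set.image_mono (ih (by omega))).trans hfB
  · have hBfin : B.Finite := by
      rw [hB]; exact hVgfin.union (hAfin.image g)
    refine hBfin.subset ?_
    rw [hPf]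
    refine Set.iUnion_subset fun k => Set.iUnion_subset fun hk => ?_
    obtain ⟨m, rfl⟩ := Nat.exists_eq_add_of_le hk
    induction m with
    | zero => simpa [hfΩf] using hsub
    | succ n ih =>
      have : f^[1 + (n + 1)] '' Ωf = f '' (f^[1 + n] '' Ωf) := by
        rw [← Set.image_comp, ← Function.iterate_succ' f (1 + n)]
        congr 1
      rw [this]
      exact (Set.image_mono (ih (by omega))).trans hfB
end

section
/- Let f be a polynomial of degree d ≥ 2 over ℂ with finite postcritical points p₀ = 0 (after normalization), p₁, …, p_{n+1}, all critical points periodic. Let m_k be the multiplicity of p_k as a critical point, ν the inverse of the induced permutation of indices, and define Q(a₁,…,a_{n+1},z) = ∫_{a_{ν(0)}}^{z} d ∏_{k=0}^{n+1} (w - a_k)^{m_k} dw (with a₀ = 0). Define G_f: ℂ^{n+1} → ℂ^{n+1} by (G_f(a))_j = Q(a₁,…,a_{n+1},a_{ν(j)}). Then G_f⁻¹({0}) = {0}. -/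
open Polynomial

lemma exists_antideriv (p : ℂ[X]) : ∃ P : ℂ[X], derivative P = p := by
  refine ⟨p.sum fun n c => C (c / (n+1)) * X^(n+1), ?_⟩
  rw [Polynomial.sum_def, map_sum]
  have : ∀ i ∈ p.support, derivative (C (p.coeff i / (i+1)) * X^(i+1)) = C (p.coeff i) * X ^ i := by
    intro i _
    rw [derivative_C_mul_X_pow, Nat.add_sub_cancel]
    congr 1
    push_cast
    rw [div_mul_cancel₀]
    exact Nat.cast_add_one_ne_zero i
  rw [Finset.sum_congr rfl this]
  exact p.sum_C_mul_X_pow_eq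

theorem stmt_13 (n d : ℕ) (hd : 2 ≤ d) (m : Fin (n + 2) → ℕ)
    (hm : ∑ k, m k = d - 1) (ν : Equiv.Perm (Fin (n + 2)))
    (Q : (Fin (n + 2) → ℂ) → ℂ → ℂ)
    (hQ0 : ∀ a, Q a (a (ν 0)) = 0)
    (hQd : ∀ a z, HasDerivAt (Q a) ((d : ℂ) * ∏ k, (z - a k) ^ (m k)) z) :
    ∀ a : Fin (n + 2) → ℂ, a 0 = 0 →
      ((∀ j, Q a (a (ν j)) = 0) ↔ a = 0) := by
  intro a ha0
  constructor
  · intro hj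
    -- the derivative polynomial
    set p : ℂ[X] := C (d:ℂ) * ∏ k, (X - C (a k)) ^ (m k) with hp
    have hpeval : ∀ z, p.eval z = (d:ℂ) * ∏ k, (z - a k) ^ m k := by
      intro z; simp [hp, eval_prod]
    have hdC : (d:ℂ) ≠ 0 := by
      exact_mod_cast (by omega : d ≠ 0)
    have hpne : p ≠ 0 := by
      apply mul_ne_zero (by simpa using hdC)
      exact Finset.prod_ne_zero_iff.2 fun k _ => pow_ne_zero _ (X_sub_C_ne_zero _)
    have hpdeg : p.natDegree = d - 1 := by
      rw [hp, natDegree_mul (by simpa using hdC)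
        (Finset.prod_ne_zero_iff.2 fun k _ => pow_ne_zero _ (X_sub_C_ne_zero _)),
        natDegree_C, natDegree_prod _ _ fun k _ => pow_ne_zero _ (X_sub_C_ne_zero _)]
      simp [natDegree_pow, hm]
    obtain ⟨P, hP⟩ := exists_antideriv p
    set F : ℂ[X] := P + C (Q a 0 - P.eval 0) with hF
    have hF' : derivative F = p := by simp [hF, hP]
    have hFd : ∀ z, HasDerivAt (fun z => F.eval z) ((d:ℂ) * ∏ k, (z - a k)^(m k)) z := by
      intro z
      have := F.hasDerivAt z
      rwa [hF', hpeval] at this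
    have key : ∀ z, Q a z = F.eval z := by
      have hc : ∀ z, Q a z - F.eval z = Q a 0 - F.eval 0 :=
        fun z => is_const_of_deriv_eq_zero (𝕜 := ℂ)
          (fun x => ((hQd a x).sub (hFd x)).differentiableAt)
          (fun x => by
            have : HasDerivAt (fun z => Q a z - F.eval z) 0 x := by
              have h := (hQd a x).sub (hFd x); rw [sub_self] at h; exact h
            exact this.deriv) z 0
      intro z
      have h0 : Q a 0 - F.eval 0 = 0 := by simp [hF]
      have := hc z; rw [h0, sub_eq_zero] at this; exact this
    have hFroot : ∀ k, F.IsRoot (a k) := by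
      intro k
      have := hj (ν.symm k)
      simp only [Equiv.apply_symm_apply] at this
      rw [key] at this
      exact this
    have hFne : F ≠ 0 := fun h => hpne (by rw [← hF', h, derivative_zero])
    have hFdeg0 : F.natDegree ≠ 0 := fun h => hpne (by rw [← hF', derivative_of_natDegree_zero h])
    have hFdeg : F.natDegree = d := by
      have := degree_derivative_eq F (Nat.pos_of_ne_zero hFdeg0)
      rw [hF', degree_eq_natDegree hpne] at this
      have : p.natDegree = F.natDegree - 1 := by exact_mod_cast this
      omega
    -- the set of values
    set S : Finset ℂ := Finset.image a Finset.univ with hS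
    have hmult : ∀ v ∈ S, (∑ k ∈ Finset.univ.filter (fun k => a k = v), m k) + 1
        ≤ rootMultiplicity v F := by
      intro v hv
      obtain ⟨k0, _, hk0⟩ := Finset.mem_image.mp hv
      have hdvd : (X - C v) ^ (∑ k ∈ Finset.univ.filter (fun k => a k = v), m k) ∣ p := by
        have h1 : ∏ k ∈ Finset.univ.filter (fun k => a k = v), (X - C (a k)) ^ (m k)
            ∣ ∏ k, (X - C (a k)) ^ (m k) :=
          Finset.prod_dvd_prod_of_subset _ _ _ (Finset.filter_subset _ _)
        have h2 : ∏ k ∈ Finset.univ.filter (fun k => a k = v), (X - C (a k)) ^ (m k)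
            = (X - C v) ^ (∑ k ∈ Finset.univ.filter (fun k => a k = v), m k) := by
          rw [← Finset.prod_pow_eq_pow_sum]
          exact Finset.prod_congr rfl fun k hk => by
            rw [(Finset.mem_filter.mp hk).2]
        exact (h2 ▸ h1).trans (Dvd.intro_left _ rfl)
      have hrp : (∑ k ∈ Finset.univ.filter (fun k => a k = v), m k) ≤ rootMultiplicity v p :=
        (le_rootMultiplicity_iff hpne).mpr hdvd
      have hroot : F.IsRoot v := hk0 ▸ hFroot k0
      have h1 : 1 ≤ rootMultiplicity v F := (rootMultiplicity_pos hFne).mpr hroot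
      have := derivative_rootMultiplicity_of_root hroot
      rw [hF'] at this
      omega
    have hsum : ∑ v ∈ S, rootMultiplicity v F ≤ d := by
      have h1 : ∀ v ∈ S, rootMultiplicity v F = F.roots.count v := fun v _ => (count_roots F).symm
      rw [Finset.sum_congr rfl h1]
      have hSsub : S ⊆ F.roots.toFinset := by
        intro v hv
        obtain ⟨k0, _, hk0⟩ := Finset.mem_image.mp hv
        rw [Multiset.mem_toFinset, mem_roots hFne]
        exact hk0 ▸ hFroot k0
      calc ∑ v ∈ S, F.roots.count v ≤ ∑ v ∈ F.roots.toFinset, F.roots.count v :=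
            Finset.sum_le_sum_of_subset hSsub
        _ = Multiset.card F.roots := F.roots.toFinset_sum_count_eq
        _ ≤ F.natDegree := F.card_roots'
        _ = d := hFdeg
    have hlow : (d - 1) + S.card ≤ ∑ v ∈ S, rootMultiplicity v F := by
      have := Finset.sum_le_sum hmult
      rw [Finset.sum_add_distrib, Finset.sum_const, smul_eq_mul, mul_one] at this
      have hfib : ∑ v ∈ S, ∑ k ∈ Finset.univ.filter (fun k => a k = v), m k = ∑ k, m k :=
        Finset.sum_fiberwise_of_maps_to (fun x _ => Finset.mem_image_of_mem a (Finset.mem_univ x)) m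
      rw [hfib, hm] at this
      omega
    have hcard : S.card ≤ 1 := by omega
    have h0S : (0:ℂ) ∈ S := ha0 ▸ Finset.mem_image_of_mem a (Finset.mem_univ 0)
    funext k
    have hkS : a k ∈ S := Finset.mem_image_of_mem a (Finset.mem_univ k)
    have : a k = 0 := by
      by_contra hne
      have : 2 ≤ S.card := Finset.one_lt_card.mpr ⟨a k, hkS, 0, h0S, hne⟩
      omega
    simpa using this
  · intro ha j
    subst ha
    simpa using hQ0 0
end

section
/- With notation as in the definition of G_f (polynomial f of degree d with all critical points periodic, Q(a,z) = ∫_{a_{ν(0)}}^z d∏_{k=0}^{n+1}(w-a_k)^{m_k} dw, a₀ = 0, G_j = Q(a, a_{ν(j)}), G₀ = 0, μ = ν⁻¹): for all 0 ≤ i < j ≤ n+1, the polynomial G_{μ(j)} - G_{μ(i)} ∈ ℂ[a₁,…,a_{n+1}] is divisible by (a_j - a_i)^{m_i + m_j + 1}. -/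
open Polynomial

lemma aux_unit {R : Type*} [CommRing R] [Algebra ℚ R] (k : ℕ) :
    IsUnit ((k : R) + 1) := by
  have h : ((k : R) + 1) = algebraMap ℚ R ((k : ℚ) + 1) := by push_cast; ring
  rw [h]
  exact (isUnit_iff_ne_zero.2 (by positivity)).map _

lemma aux_dvd {R : Type*} [CommRing R] [Algebra ℚ R] (T : R[X]) (c : R)
    (h : ∀ k, c ∣ (derivative T).coeff k) : c ∣ T.eval 1 - T.eval 0 := by
  have hc : ∀ k, c ∣ T.coeff (k + 1) := by
    intro k
    have h1 := h k
    rw [coeff_derivative] at h1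
    exact ((aux_unit k).dvd_mul_right).mp h1
  rw [eval_eq_sum_range (1 : R), ← coeff_zero_eq_eval_zero, Finset.sum_range_succ']
  simp only [one_pow, mul_one]
  simp only [add_sub_cancel_right]
  exact Finset.dvd_sum fun k _ => hc k

theorem stmt_15 (n d : ℕ) (hd : 2 ≤ d) (m : Fin (n + 2) → ℕ)
    (hm : ∑ k, m k = d - 1)
    (x : Fin (n + 2) → MvPolynomial (Fin (n + 2)) ℂ)
    (hx0 : x 0 = 0) (hx : ∀ k, k ≠ 0 → x k = MvPolynomial.X k)
    (S : Polynomial (MvPolynomial (Fin (n + 2)) ℂ))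
    (hS : Polynomial.derivative S =
      (d : Polynomial (MvPolynomial (Fin (n + 2)) ℂ)) *
        ∏ k, (Polynomial.X - Polynomial.C (x k)) ^ (m k)) :
    ∀ i j : Fin (n + 2), i < j →
      (x j - x i) ^ (m i + m j + 1) ∣
        (Polynomial.eval (x j) S - Polynomial.eval (x i) S) := by
  intro i j hij
  set u : MvPolynomial (Fin (n + 2)) ℂ := x j - x i with hu
  set q : (MvPolynomial (Fin (n + 2)) ℂ)[X] := C (x i) + C u * X with hq
  set T := S.comp q with hT
  have hne : i ≠ j := ne_of_lt hij
  have hdT : derivative T = C u * ((d : (MvPolynomial (Fin (n + 2)) ℂ)[X]) *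
      ∏ k, (q - C (x k)) ^ m k) := by
    rw [hT, derivative_comp, hS]
    have hdq : derivative q = C u := by simp [hq]
    rw [hdq]
    congr 1
    simp [mul_comp, prod_comp, pow_comp, sub_comp, X_comp, C_comp, natCast_comp]
  have hi : C u ∣ q - C (x i) := ⟨X, by rw [hq]; ring⟩
  have hj : C u ∣ q - C (x j) := ⟨X - 1, by rw [hq, hu, map_sub]; ring⟩
  have hprod : (C u) ^ (m i + m j) ∣ ∏ k, (q - C (x k)) ^ m k := by
    rw [← Finset.mul_prod_erase _ _ (Finset.mem_univ i),
      ← Finset.mul_prod_erase _ _ (Finset.mem_erase.2 ⟨hne.symm, Finset.mem_univ j⟩),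
      pow_add]
    exact mul_dvd_mul (pow_dvd_pow_of_dvd hi _)
      (dvd_mul_of_dvd_left (pow_dvd_pow_of_dvd hj _) _)
  have hdvd : C (u ^ (m i + m j + 1)) ∣ derivative T := by
    rw [map_pow, hdT, pow_succ, mul_comm ((C u) ^ (m i + m j)) (C u)]
    exact mul_dvd_mul_left _ (dvd_mul_of_dvd_right hprod _)
  have hcoeff : ∀ k, u ^ (m i + m j + 1) ∣ (derivative T).coeff k := by
    intro k
    obtain ⟨r, hr⟩ := hdvd
    exact ⟨r.coeff k, by rw [hr, coeff_C_mul]⟩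
  have key := aux_dvd T _ hcoeff
  have h1 : T.eval 1 = S.eval (x j) := by
    rw [hT, eval_comp]; congr 1; simp [hq, hu]
  have h0 : T.eval 0 = S.eval (x i) := by
    rw [hT, eval_comp]; congr 1; simp [hq]
  rwa [h1, h0] at key
end
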